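/- Let Λ be an ADE Dynkin diagram with vertex set W and bipartition ε_Λ : W → {0,1}, and let B_Λ be the exchange matrix of the twist quiver Q(Λ × Λ): the vertex set is V = W × {1,2}, and for each edge {u,v} of Λ, B_Λ((u,i),(v,i)) = 1 if ε_Λ(u) = 0 and −1 if ε_Λ(u) = 1 (for i = 1,2), B_Λ((u,1),(v,2)) = B_Λ((u,2),(v,1)) = 1 if ε_Λ(u) = 1 and −1 if ε_Λ(u) = 0, with B_Λ = 0 on all other pairs of vertices (B_Λ is skew-symmetric). For w ∈ W let σ_w denote the operation of simultaneously permuting rows and columns by the transposition of (w,1) and (w,2). Then for every w ∈ W: σ_w( μ_{(w,1)}( μ_{(w,2)}( B_Λ ) ) ) = B_Λ. -/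

import Mathlib

open scoped BigOperators

/-- The Dynkin diagram `A_n`: vertices `0, …, n-1` with edges `{i, i+1}`. -/
def adeA (n : ℕ) : SimpleGraph (Fin n) :=
  SimpleGraph.fromRel (fun i j => (i : ℕ) + 1 = (j : ℕ))

/-- The Dynkin diagram `D_n` (`n ≥ 4`): a path on vertices `0, …, n-2`
together with the edge `{n-3, n-1}`. -/
def adeD (n : ℕ) : SimpleGraph (Fin n) :=
  SimpleGraph.fromRel (fun i j =>
    ((i : ℕ) + 1 = (j : ℕ) ∧ (j : ℕ) ≤ n - 2) ∨ ((i : ℕ) = n - 3 ∧ (j : ℕ) = n - 1))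

/-- The Dynkin diagram `E_n` (`n = 6, 7, 8`): a path on vertices `0, …, n-2`
together with the edge `{2, n-1}`. -/
def adeE (n : ℕ) : SimpleGraph (Fin n) :=
  SimpleGraph.fromRel (fun i j =>
    ((i : ℕ) + 1 = (j : ℕ) ∧ (j : ℕ) ≤ n - 2) ∨ ((i : ℕ) = 2 ∧ (j : ℕ) = n - 1))

/-- A graph is an ADE Dynkin diagram if it is isomorphic to some `A_n` (`n ≥ 1`),
`D_n` (`n ≥ 4`), or `E_n` (`n = 6, 7, 8`). -/
def IsADE {W : Type*} (G : SimpleGraph W) : Prop :=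
  (∃ n : ℕ, 1 ≤ n ∧ Nonempty (G ≃g adeA n)) ∨
  (∃ n : ℕ, 4 ≤ n ∧ Nonempty (G ≃g adeD n)) ∨
  (∃ n : ℕ, (n = 6 ∨ n = 7 ∨ n = 8) ∧ Nonempty (G ≃g adeE n))

/-- Matrix mutation of a skew-symmetric exchange matrix at a vertex `k`. -/
def mutateEx {V : Type} [DecidableEq V] (B : V → V → ℤ) (k : V) : V → V → ℤ :=
  fun x y => if x = k ∨ y = k then -B x y
    else B x y + Int.sign (B x k) * max (B x k * B k y) 0

/-- The exchange matrix of the twist quiver `Q(Λ × Λ)` on the vertex set `W × Fin 2`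
(the copy `(w, 1)` of the text corresponds to the index `0`, and `(w, 2)` to `1`). -/
def twistExchange {W : Type} (L : SimpleGraph W) [DecidableRel L.Adj] (eps : W → ℤ) :
    W × Fin 2 → W × Fin 2 → ℤ :=
  fun p q =>
    if L.Adj p.1 q.1 then
      (if p.2 = q.2 then (if eps p.1 = 0 then 1 else -1)
       else (if eps p.1 = 1 then 1 else -1))
    else 0

/-- The map on `W × Fin 2` swapping the two copies `(w, 0)` and `(w, 1)` of `w`. -/
def swapAt {W : Type} [DecidableEq W] (w : W) (p : W × Fin 2) : W × Fin 2 :=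
  if p.1 = w then (p.1, p.2 + 1) else p

/-- The operation `σ_w` on exchange matrices: simultaneously permute rows and columns by the
transposition of the two copies of `w`. -/
def sigmaSwap {W : Type} [DecidableEq W] (w : W)
    (M : W × Fin 2 → W × Fin 2 → ℤ) : W × Fin 2 → W × Fin 2 → ℤ :=
  fun x y => M (swapAt w x) (swapAt w y)

/-- for the twist quiver of an ADE Dynkin diagram `Λ`,
`σ_w(μ_{(w,1)}(μ_{(w,2)}(B_Λ))) = B_Λ` for every vertex `w` of `Λ`. -/
theorem twist_exchange_invariant
    {W : Type} [Fintype W] [DecidableEq W]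
    (L : SimpleGraph W) [DecidableRel L.Adj] (hADE : IsADE L)
    (eps : W → ℤ) (heps : ∀ w, eps w = 0 ∨ eps w = 1)
    (hbip : ∀ u v, L.Adj u v → eps u ≠ eps v)
    (w : W) :
    sigmaSwap w (mutateEx (mutateEx (twistExchange L eps) (w, 1)) (w, 0)) =
      twistExchange L eps := by
  have hirr : ∀ a : W, ¬ L.Adj a a := fun a => L.irrefl
  have hFin : ∀ i : Fin 2, i = 0 ∨ i = 1 := by decide
  funext x y
  obtain ⟨u, i⟩ := x
  obtain ⟨v, j⟩ := y
  by_cases hu : u = w <;> by_cases hv : v = w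
  · subst hu; subst hv
    rcases hFin i with rfl | rfl <;> rcases hFin j with rfl | rfl <;>
      simp [sigmaSwap, swapAt, mutateEx, twistExchange, hirr]
  · subst hu
    by_cases hav : L.Adj u v
    · have h1 := hbip u v hav
      have hav2 := L.adj_symm hav
      rcases heps u with hw | hw <;> rcases heps v with hv2 | hv2 <;>
      rcases hFin i with rfl | rfl <;> rcases hFin j with rfl | rfl <;>
        simp [sigmaSwap, swapAt, mutateEx, twistExchange, hirr, hv, hw, hv2,
          hav, hav2] <;> try omega
    · have hav' : ¬ L.Adj v u := fun h => hav (L.adj_symm h)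
      rcases hFin i with rfl | rfl <;> rcases hFin j with rfl | rfl <;>
        simp [sigmaSwap, swapAt, mutateEx, twistExchange, hirr, hv, hav, hav']
  · subst hv
    by_cases hau : L.Adj u v
    · have h1 := hbip u v hau
      have hau2 := L.adj_symm hau
      rcases heps v with hw | hw <;> rcases heps u with hu2 | hu2 <;>
      rcases hFin i with rfl | rfl <;> rcases hFin j with rfl | rfl <;>
        simp [sigmaSwap, swapAt, mutateEx, twistExchange, hirr, hu, hw, hu2,
          hau, hau2] <;> try omega
    · have hau' : ¬ L.Adj v u := fun h => hau (L.adj_symm h)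
      rcases hFin i with rfl | rfl <;> rcases hFin j with rfl | rfl <;>
        simp [sigmaSwap, swapAt, mutateEx, twistExchange, hirr, hu, hau, hau']
  · by_cases hau : L.Adj u w <;> by_cases hav : L.Adj v w
    · have h1 := hbip u w hau
      have h2 := hbip v w hav
      have h3 : ∀ h : L.Adj u v, eps u ≠ eps v := fun h => hbip u v h
      have hau2 := L.adj_symm hau
      have hav2 := L.adj_symm hav
      rcases heps w with hw | hw <;> rcases heps u with hu2 | hu2 <;>
        rcases heps v with hv2 | hv2 <;>
        first
          | (exfalso; omega)
          | (have huv : ¬ L.Adj u v := fun h => h3 h (by omega)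
             have huv2 : ¬ L.Adj v u := fun h => huv (L.adj_symm h)
             rcases hFin i with rfl | rfl <;> rcases hFin j with rfl | rfl <;>
             simp [sigmaSwap, swapAt, mutateEx, twistExchange, hirr, hu, hv,
               hw, hu2, hv2, hau, hav, hau2, hav2, huv, huv2] <;> try omega)
    · have hav' : ¬ L.Adj w v := fun h => hav (L.adj_symm h)
      have hau2 := L.adj_symm hau
      rcases heps w with hw | hw <;> rcases heps u with hu2 | hu2 <;>
      rcases hFin i with rfl | rfl <;> rcases hFin j with rfl | rfl <;>
        simp [sigmaSwap, swapAt, mutateEx, twistExchange, hirr, hu, hv, hw, hu2,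
          hau, hau2, hav, hav'] <;> try omega
    · have hau' : ¬ L.Adj w u := fun h => hau (L.adj_symm h)
      have hav2 := L.adj_symm hav
      rcases heps w with hw | hw <;> rcases heps v with hv2 | hv2 <;>
      rcases hFin i with rfl | rfl <;> rcases hFin j with rfl | rfl <;>
        simp [sigmaSwap, swapAt, mutateEx, twistExchange, hirr, hu, hv, hw, hv2,
          hau, hau', hav, hav2] <;> try omega
    · have hau' : ¬ L.Adj w u := fun h => hau (L.adj_symm h)
      have hav' : ¬ L.Adj w v := fun h => hav (L.adj_symm h)
      rcases hFin i with rfl | rfl <;> rcases hFin j with rfl | rfl <;>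
        simp [sigmaSwap, swapAt, mutateEx, twistExchange, hirr, hu, hv, hau, hav,
          hau', hav']
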